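/- With φ_n(a_0,...,a_n) := ⟨a_0[D,a_1],...,[D,a_n]⟩ defined from a bracket satisfying cyclicity and the commutation rule, one has for n = 2: b(B_0 φ_2) = 2φ_2 − B_0 φ_3, where B_0ψ(a_0,...,a_k) := ψ(1, a_0,...,a_k). -/

import Mathlib

/-- With `φ_n(a_0,…,a_n) := ⟨a_0[D,a_1],…,[D,a_n]⟩` defined from a bracket satisfying
cyclicity and the commutation rule, one has for `n = 2`:
`b(B_0 φ_2) = 2φ_2 − B_0 φ_3`, where `B_0ψ(a_0,…,a_k) := ψ(1, a_0,…,a_k)`.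
Note `B_0φ_2(x,y) = ⟨[D,x],[D,y]⟩` and `B_0φ_3(x,y,z) = ⟨[D,x],[D,y],[D,z]⟩`. -/
theorem b_B0_phi_two
    {H : Type*} [NormedAddCommGroup H] [InnerProductSpace ℂ H] [CompleteSpace H]
    (A : Subalgebra ℂ (H →L[ℂ] H)) (D : H →L[ℂ] H) (hD : IsSelfAdjoint D)
    (bracket : ∀ n : ℕ, MultilinearMap ℂ (fun _ : Fin n => H →L[ℂ] H) ℂ)
    (hcycl : ∀ (n : ℕ) (V : Fin (n + 1) → (H →L[ℂ] H)),
      bracket (n + 1) V = bracket (n + 1) (fun i => V (i + 1)))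
    (hcomm : ∀ (n : ℕ) (V : Fin (n + 1) → (H →L[ℂ] H)) (a : H →L[ℂ] H), a ∈ A →
      bracket (n + 1) (Function.update V 0 (a * V 0)) -
        bracket (n + 1) (Function.update V (Fin.last n) (V (Fin.last n) * a)) =
      bracket (n + 2) (Fin.snoc V (D * a - a * D)))
    (a₀ a₁ a₂ : H →L[ℂ] H) (h₀ : a₀ ∈ A) (h₁ : a₁ ∈ A) (h₂ : a₂ ∈ A) :
    bracket 2 ![D * (a₀ * a₁) - (a₀ * a₁) * D, D * a₂ - a₂ * D] -
      bracket 2 ![D * a₀ - a₀ * D, D * (a₁ * a₂) - (a₁ * a₂) * D] +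
      bracket 2 ![D * (a₂ * a₀) - (a₂ * a₀) * D, D * a₁ - a₁ * D] =
    2 * bracket 2 ![a₀ * (D * a₁ - a₁ * D), D * a₂ - a₂ * D] -
      bracket 3 ![D * a₀ - a₀ * D, D * a₁ - a₁ * D, D * a₂ - a₂ * D] := by
  have key : ∀ x y a : H →L[ℂ] H, a ∈ A →
      bracket 2 ![a * x, y] - bracket 2 ![x, y * a] =
        bracket 3 ![x, y, D * a - a * D] := by
    intro x y a ha
    have h := hcomm 1 ![x, y] a ha
    have h1 : Function.update ![x, y] (0 : Fin 2) (a * (![x, y] 0)) = ![a * x, y] := by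
      ext i; fin_cases i <;> simp
    have h2 : Function.update ![x, y] (Fin.last 1) ((![x, y] (Fin.last 1)) * a) = ![x, y * a] := by
      ext i; fin_cases i <;> simp [Fin.last]
    have h3 : (Fin.snoc ![x, y] (D * a - a * D) : Fin 3 → (H →L[ℂ] H)) =
        ![x, y, D * a - a * D] := by
      funext i; fin_cases i <;> simp [Fin.snoc] <;> rfl
    rw [h1, h2, h3] at h
    exact h
  have cyc2 : ∀ x y : H →L[ℂ] H, bracket 2 ![x, y] = bracket 2 ![y, x] := by
    intro x y
    have h := hcycl 1 ![x, y]
    have h1 : (fun i : Fin 2 => ![x, y] (i + 1)) = ![y, x] := by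
      ext i; fin_cases i <;> simp
    rw [h1] at h; exact h
  have cyc3 : ∀ x y z : H →L[ℂ] H, bracket 3 ![x, y, z] = bracket 3 ![y, z, x] := by
    intro x y z
    have h := hcycl 2 ![x, y, z]
    have h1 : (fun i : Fin 3 => ![x, y, z] (i + 1)) = ![y, z, x] := by
      ext i; fin_cases i <;> simp
    rw [h1] at h; exact h
  have add1 : ∀ u v w : H →L[ℂ] H,
      bracket 2 ![u + v, w] = bracket 2 ![u, w] + bracket 2 ![v, w] := by
    intro u v w
    have h := (bracket 2).map_update_add ![u, w] 0 u v
    have e0 : ∀ z : H →L[ℂ] H, Function.update ![u, w] (0 : Fin 2) z = ![z, w] := by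
      intro z; ext i; fin_cases i <;> simp
    rw [e0, e0, e0] at h
    exact h
  have add2 : ∀ u v w : H →L[ℂ] H,
      bracket 2 ![w, u + v] = bracket 2 ![w, u] + bracket 2 ![w, v] := by
    intro u v w
    have h := (bracket 2).map_update_add ![w, u] 1 u v
    have e0 : ∀ z : H →L[ℂ] H, Function.update ![w, u] (1 : Fin 2) z = ![w, z] := by
      intro z; ext i; fin_cases i <;> simp
    rw [e0, e0, e0] at h
    exact h
  have der : ∀ a b : H →L[ℂ] H,
      D * (a * b) - (a * b) * D = (D * a - a * D) * b + a * (D * b - b * D) := by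
    intro a b; noncomm_ring
  have lhs1 : bracket 2 ![D * (a₀ * a₁) - (a₀ * a₁) * D, D * a₂ - a₂ * D] =
      bracket 2 ![(D * a₀ - a₀ * D) * a₁, D * a₂ - a₂ * D] +
        bracket 2 ![a₀ * (D * a₁ - a₁ * D), D * a₂ - a₂ * D] := by
    rw [der a₀ a₁, add1]
  have lhs2 : bracket 2 ![D * a₀ - a₀ * D, D * (a₁ * a₂) - (a₁ * a₂) * D] =
      bracket 2 ![D * a₀ - a₀ * D, (D * a₁ - a₁ * D) * a₂] +
        bracket 2 ![D * a₀ - a₀ * D, a₁ * (D * a₂ - a₂ * D)] := by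
    rw [der a₁ a₂, add2]
  have lhs3 : bracket 2 ![D * (a₂ * a₀) - (a₂ * a₀) * D, D * a₁ - a₁ * D] =
      bracket 2 ![(D * a₂ - a₂ * D) * a₀, D * a₁ - a₁ * D] +
        bracket 2 ![a₂ * (D * a₀ - a₀ * D), D * a₁ - a₁ * D] := by
    rw [der a₂ a₀, add1]
  have e1 := key (D * a₂ - a₂ * D) (D * a₀ - a₀ * D) a₁ h₁
  have e2 := key (D * a₀ - a₀ * D) (D * a₁ - a₁ * D) a₂ h₂
  have e3 := key (D * a₁ - a₁ * D) (D * a₂ - a₂ * D) a₀ h₀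
  rw [cyc2 (a₁ * (D * a₂ - a₂ * D)) (D * a₀ - a₀ * D),
      cyc2 (D * a₂ - a₂ * D) ((D * a₀ - a₀ * D) * a₁),
      cyc3 (D * a₂ - a₂ * D) (D * a₀ - a₀ * D) (D * a₁ - a₁ * D),
      cyc3 (D * a₀ - a₀ * D) (D * a₁ - a₁ * D) (D * a₂ - a₂ * D),
      ← cyc3 (D * a₀ - a₀ * D) (D * a₁ - a₁ * D) (D * a₂ - a₂ * D)] at e1
  rw [cyc2 (D * a₁ - a₁ * D) ((D * a₂ - a₂ * D) * a₀),
      cyc3 (D * a₁ - a₁ * D) (D * a₂ - a₂ * D) (D * a₀ - a₀ * D),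
      cyc3 (D * a₂ - a₂ * D) (D * a₀ - a₀ * D) (D * a₁ - a₁ * D)] at e3
  rw [lhs1, lhs2, lhs3]
  linear_combination -e1 + e2 - e3
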